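/- For a finitely supported multi-index ν and a unit multi-index e, the double sum over 0 < η ≤ ν and 0 < ℓ ≤ η of C(ν,η)·C(η,ℓ)·[1/2]_{|η-ℓ|}·[1/2]_{|ℓ|}·[1/2]_{|ν+e-η|} is at most 3·[1/2]_{|ν+e|}. -/

import Mathlib

open Finset

/-- `ffHalf n = |(1/2)_n|`, the absolute value of the falling factorial of `1/2`. -/
noncomputable def ffHalf (n : ℕ) : ℝ := |(descPochhammer ℝ n).eval (1/2 : ℝ)|

lemma ffHalf_zero : ffHalf 0 = 1 := by simp [ffHalf]

lemma ffHalf_nonneg (n : ℕ) : 0 ≤ ffHalf n := abs_nonneg _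

lemma ffHalf_succ (n : ℕ) : ffHalf (n + 1) = ffHalf n * |1/2 - (n : ℝ)| := by
  rw [ffHalf, descPochhammer_succ_eval, abs_mul]; rfl

lemma catalan_rec (n : ℕ) : (n + 2) * catalan (n + 1) = 2 * (2 * n + 1) * catalan n := by
  have h1 := succ_mul_catalan_eq_centralBinom (n + 1)
  have h2 := succ_mul_catalan_eq_centralBinom n
  have h3 := Nat.succ_mul_centralBinom_succ n
  have : (n + 1) * ((n + 2) * catalan (n + 1)) = (n + 1) * (2 * (2 * n + 1) * catalan n) := by
    calc (n + 1) * ((n + 2) * catalan (n + 1)) = (n + 1) * Nat.centralBinom (n + 1) := by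
          rw [h1]
      _ = 2 * (2 * n + 1) * Nat.centralBinom n := h3
      _ = 2 * (2 * n + 1) * ((n + 1) * catalan n) := by rw [h2]
      _ = (n + 1) * (2 * (2 * n + 1) * catalan n) := by ring
  exact Nat.eq_of_mul_eq_mul_left (by omega) this

lemma ffHalf_succ_eq (n : ℕ) :
    ffHalf (n + 1) = (catalan n : ℝ) * Nat.factorial (n+1) / (2 * 4 ^ n) := by
  induction n with
  | zero => norm_num [ffHalf_succ, ffHalf_zero]
  | succ n ih =>
      rw [ffHalf_succ, ih]
      have habs : |1/2 - ((n+1 : ℕ) : ℝ)| = (2 * n + 1) / 2 := by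
        rw [abs_of_nonpos (by push_cast; linarith)]; push_cast; ring
      rw [habs]
      have hc : ((n + 2 : ℕ) : ℝ) * (catalan (n + 1) : ℝ)
          = 2 * (2 * n + 1) * (catalan n : ℝ) := by
        exact_mod_cast congrArg (Nat.cast : ℕ → ℝ) (catalan_rec n)
      have hf : (Nat.factorial (n+2) : ℝ) = (n + 2) * Nat.factorial (n+1) := by
        rw [Nat.factorial_succ]; push_cast; ring
      push_cast at hc ⊢
      rw [hf]
      have h2 : (0:ℝ) < (n:ℝ) + 2 := by positivity
      field_simp
      linear_combination (-2 * (4:ℝ) ^ n) * hc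

lemma cat_conv_nat (d : ℕ) :
    ∑ i ∈ range (d + 1), catalan i * catalan (d - i) = catalan (d + 1) := by
  rw [catalan_succ', Finset.Nat.sum_antidiagonal_eq_sum_range_succ_mk]

lemma conv_interior (d : ℕ) :
    ∑ m ∈ Icc 1 (d + 1), ((d + 2).choose m : ℝ) * ffHalf m * ffHalf (d + 2 - m)
      = 2 * ffHalf (d + 2) := by
  rw [← Finset.Ico_add_one_right_eq_Icc, Finset.sum_Ico_eq_sum_range]
  have h : d + 1 + 1 - 1 = d + 1 := rfl
  rw [h]
  have key : ∀ i ∈ range (d + 1),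
      ((d + 2).choose (1 + i) : ℝ) * ffHalf (1 + i) * ffHalf (d + 2 - (1 + i))
        = (Nat.factorial (d + 2) : ℝ) / 4 ^ (d + 1) * ((catalan i : ℝ) * catalan (d - i)) := by
    intro i hi
    have hid : i ≤ d := by have := mem_range.mp hi; omega
    have h1 : d + 2 - (1 + i) = (d - i) + 1 := by omega
    have h2 : 1 + i = i + 1 := by omega
    rw [h1, h2, ffHalf_succ_eq, ffHalf_succ_eq]
    have hcf : ((d + 2).choose (i + 1) : ℝ) * Nat.factorial (i + 1) * Nat.factorial (d - i + 1)
        = Nat.factorial (d + 2) := by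
      have h0 := Nat.choose_mul_factorial_mul_factorial (show i + 1 ≤ d + 2 by omega)
      have h3 : d + 2 - (i + 1) = d - i + 1 := by omega
      rw [h3] at h0
      exact_mod_cast congrArg (Nat.cast : ℕ → ℝ) h0
    have h4 : (4:ℝ) ^ i * 4 ^ (d - i) = 4 ^ d := by
      rw [← pow_add]; congr 1; omega
    have hp1 : (0:ℝ) < 4 ^ i := by positivity
    have hp2 : (0:ℝ) < 4 ^ (d - i) := by positivity
    field_simp
    linear_combination (4 * (4:ℝ) ^ d * ((catalan i : ℝ) * catalan (d - i))) * hcf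
      - 4 * (Nat.factorial (d + 2) : ℝ) * ((catalan i : ℝ) * catalan (d - i)) * h4
  rw [Finset.sum_congr rfl key, ← Finset.mul_sum]
  have : ∑ i ∈ range (d + 1), (catalan i : ℝ) * catalan (d - i) = (catalan (d + 1) : ℝ) := by
    exact_mod_cast congrArg (Nat.cast : ℕ → ℝ) (cat_conv_nat d)
  rw [this, ffHalf_succ_eq]
  field_simp

lemma conv_outer (d : ℕ) :
    ∑ k ∈ Icc 1 (d + 1), ((d + 1).choose k : ℝ) * ffHalf k * ffHalf (d + 2 - k)
      = ffHalf (d + 2) := by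
  rw [← Finset.Ico_add_one_right_eq_Icc, Finset.sum_Ico_eq_sum_range]
  have h : d + 1 + 1 - 1 = d + 1 := rfl
  rw [h]
  have key : ∀ i ∈ range (d + 1),
      ((d + 1).choose (1 + i) : ℝ) * ffHalf (1 + i) * ffHalf (d + 2 - (1 + i))
        = (Nat.factorial (d + 1) : ℝ) / 4 ^ (d + 1)
            * ((((d - i : ℕ) : ℝ) + 1) * ((catalan i : ℝ) * catalan (d - i))) := by
    intro i hi
    have hid : i ≤ d := by have := mem_range.mp hi; omega
    have h1 : d + 2 - (1 + i) = (d - i) + 1 := by omega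
    have h2 : 1 + i = i + 1 := by omega
    rw [h1, h2, ffHalf_succ_eq, ffHalf_succ_eq]
    have hcf : ((d + 1).choose (i + 1) : ℝ) * Nat.factorial (i + 1) * Nat.factorial (d - i)
        = Nat.factorial (d + 1) := by
      have h0 := Nat.choose_mul_factorial_mul_factorial (show i + 1 ≤ d + 1 by omega)
      have h3 : d + 1 - (i + 1) = d - i := by omega
      rw [h3] at h0
      exact_mod_cast congrArg (Nat.cast : ℕ → ℝ) h0
    have hfs : (Nat.factorial (d - i + 1) : ℝ) = (((d - i : ℕ) : ℝ) + 1) * Nat.factorial (d - i) := by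
      rw [Nat.factorial_succ]; push_cast; ring
    have h4 : (4:ℝ) ^ i * 4 ^ (d - i) = 4 ^ d := by
      rw [← pow_add]; congr 1; omega
    have hp1 : (0:ℝ) < 4 ^ i := by positivity
    have hp2 : (0:ℝ) < 4 ^ (d - i) := by positivity
    have hdi : ((d - i : ℕ) : ℝ) = (d : ℝ) - (i : ℝ) := by
      rw [Nat.cast_sub hid]
    rw [hfs, hdi]
    field_simp
    linear_combination (4 * (4:ℝ) ^ d * (((d : ℝ) - i + 1) * ((catalan i : ℝ) * catalan (d - i)))) * hcf
      - 4 * (Nat.factorial (d + 1) : ℝ) * (((d : ℝ) - i + 1) * ((catalan i : ℝ) * catalan (d - i))) * h4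
  rw [Finset.sum_congr rfl key, ← Finset.mul_sum]
  have hS : ∑ i ∈ range (d + 1), ((((d - i : ℕ) : ℝ) + 1) * ((catalan i : ℝ) * catalan (d - i)))
      = (((d : ℝ) + 2) * (catalan (d + 1) : ℝ)) / 2 := by
    have hrefl := Finset.sum_range_reflect
      (fun i => ((((d - i : ℕ) : ℝ) + 1) * ((catalan i : ℝ) * catalan (d - i)))) (d + 1)
    have hT : ∑ j ∈ range (d + 1),
        (fun i => ((((d - i : ℕ) : ℝ) + 1) * ((catalan i : ℝ) * catalan (d - i)))) (d + 1 - 1 - j)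
          = ∑ j ∈ range (d + 1), (((j : ℕ) : ℝ) + 1) * ((catalan j : ℝ) * catalan (d - j)) := by
      apply Finset.sum_congr rfl
      intro j hj
      have hjd : j ≤ d := by have := mem_range.mp hj; omega
      simp only
      have e1 : d + 1 - 1 - j = d - j := by omega
      have e2 : d - (d - j) = j := by omega
      rw [e1, e2]
      ring
    have hdouble : ∑ i ∈ range (d + 1), ((((d - i : ℕ) : ℝ) + 1) * ((catalan i : ℝ) * catalan (d - i)))
        + ∑ j ∈ range (d + 1), (((j : ℕ) : ℝ) + 1) * ((catalan j : ℝ) * catalan (d - j))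
        = ((d : ℝ) + 2) * (catalan (d + 1) : ℝ) := by
      rw [← Finset.sum_add_distrib]
      have : ∀ i ∈ range (d + 1),
          ((((d - i : ℕ) : ℝ) + 1) * ((catalan i : ℝ) * catalan (d - i))
            + (((i : ℕ) : ℝ) + 1) * ((catalan i : ℝ) * catalan (d - i)))
          = ((d : ℝ) + 2) * ((catalan i : ℝ) * catalan (d - i)) := by
        intro i hi
        have hid : i ≤ d := by have := mem_range.mp hi; omega
        have : ((d - i : ℕ) : ℝ) = (d : ℝ) - (i : ℝ) := by
          have : (d - i) + i = d := by omega
          have := congrArg (Nat.cast : ℕ → ℝ) this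
          push_cast at this
          linarith
        rw [this]; ring
      rw [Finset.sum_congr rfl this, ← Finset.mul_sum]
      have : ∑ i ∈ range (d + 1), (catalan i : ℝ) * catalan (d - i) = (catalan (d + 1) : ℝ) := by
        exact_mod_cast congrArg (Nat.cast : ℕ → ℝ) (cat_conv_nat d)
      rw [this]
    rw [← hT] at hdouble
    rw [hrefl] at hdouble
    linarith
  rw [hS, ffHalf_succ_eq]
  have hf2 : (Nat.factorial (d + 2) : ℝ) = ((d:ℝ) + 2) * Nat.factorial (d + 1) := by
    rw [Nat.factorial_succ]; push_cast; ring
  rw [hf2]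
  field_simp

lemma inner_le (k : ℕ) :
    ∑ m ∈ Icc 1 k, (k.choose m : ℝ) * ffHalf m * ffHalf (k - m) ≤ 3 * ffHalf k := by
  match k with
  | 0 => simp [ffHalf_zero]
  | 1 =>
      have : Icc 1 1 = {1} := rfl
      rw [this, Finset.sum_singleton]
      simp [ffHalf_zero]
      have := ffHalf_nonneg 1
      linarith
  | (d + 2) =>
      have hins : Icc 1 (d + 2) = insert (d + 2) (Icc 1 (d + 1)) := by
        ext x; simp [mem_Icc, mem_insert]; omega
      rw [hins, Finset.sum_insert (by simp)]
      rw [conv_interior d]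
      simp [Nat.choose_self, Nat.sub_self, ffHalf_zero]
      linarith [ffHalf_nonneg (d+2)]

lemma scalar_final (n : ℕ) :
    ∑ k ∈ Icc 1 n, (n.choose k : ℝ)
        * (∑ m ∈ Icc 1 k, (k.choose m : ℝ) * ffHalf m * ffHalf (k - m))
        * ffHalf (n + 1 - k)
      ≤ 3 * ffHalf (n + 1) := by
  match n with
  | 0 =>
      simp
      have := ffHalf_nonneg 1
      linarith
  | (d + 1) =>
      calc ∑ k ∈ Icc 1 (d + 1), ((d + 1).choose k : ℝ)
              * (∑ m ∈ Icc 1 k, (k.choose m : ℝ) * ffHalf m * ffHalf (k - m))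
              * ffHalf (d + 1 + 1 - k)
          ≤ ∑ k ∈ Icc 1 (d + 1), 3 * (((d + 1).choose k : ℝ) * ffHalf k * ffHalf (d + 2 - k)) := by
            apply Finset.sum_le_sum
            intro k hk
            have h1 : d + 1 + 1 - k = d + 2 - k := rfl
            rw [h1]
            have h2 : ((d + 1).choose k : ℝ) * (∑ m ∈ Icc 1 k, (k.choose m : ℝ) * ffHalf m * ffHalf (k - m))
                ≤ ((d + 1).choose k : ℝ) * (3 * ffHalf k) :=
              mul_le_mul_of_nonneg_left (inner_le k) (by positivity)
            calc ((d + 1).choose k : ℝ) * (∑ m ∈ Icc 1 k, (k.choose m : ℝ) * ffHalf m * ffHalf (k - m)) * ffHalf (d + 2 - k)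
                ≤ ((d + 1).choose k : ℝ) * (3 * ffHalf k) * ffHalf (d + 2 - k) :=
                  mul_le_mul_of_nonneg_right h2 (ffHalf_nonneg _)
              _ = 3 * (((d + 1).choose k : ℝ) * ffHalf k * ffHalf (d + 2 - k)) := by ring
        _ = 3 * ffHalf (d + 2) := by
            rw [← Finset.mul_sum, conv_outer d]

/-- degree `|ν|` of a multi-index: the sum of its entries. -/
def mdeg (ν : ℕ →₀ ℕ) : ℕ := ν.sum fun _ k => k

/-- multi-index binomial coefficient `C(ν,η) = ∏_j C(ν_j, η_j)`. -/
def mchoose (ν η : ℕ →₀ ℕ) : ℕ := ∏ j ∈ ν.support, (ν j).choose (η j)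

lemma mdeg_zero : mdeg 0 = 0 := by simp [mdeg]

lemma mdeg_add (x y : ℕ →₀ ℕ) : mdeg (x + y) = mdeg x + mdeg y :=
  Finsupp.sum_add_index' (fun _ => rfl) (fun _ _ _ => rfl)

lemma mdeg_single (j m : ℕ) : mdeg (Finsupp.single j m) = m :=
  Finsupp.sum_single_index rfl

lemma mdeg_mono {x y : ℕ →₀ ℕ} (h : x ≤ y) : mdeg x ≤ mdeg y := by
  obtain ⟨c, rfl⟩ := le_iff_exists_add.mp h
  rw [mdeg_add]; omega

lemma mdeg_sub {x y : ℕ →₀ ℕ} (h : x ≤ y) : mdeg (y - x) = mdeg y - mdeg x := by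
  have h1 : (y - x) + x = y := tsub_add_cancel_of_le h
  have h2 := mdeg_add (y - x) x
  rw [h1] at h2
  omega

lemma mchoose_zero_right (ν : ℕ →₀ ℕ) : mchoose ν 0 = 1 := by
  simp [mchoose]

lemma Iic_zero_finsupp : Finset.Iic (0 : ℕ →₀ ℕ) = {0} := by
  ext y
  simp [Finset.mem_Iic, le_zero_iff]

lemma Ioc_zero_finsupp (x : ℕ →₀ ℕ) : Finset.Ioc 0 x = (Finset.Iic x).erase 0 := by
  ext y
  simp only [Finset.mem_Ioc, Finset.mem_Iic, Finset.mem_erase]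
  constructor
  · rintro ⟨h1, h2⟩; exact ⟨pos_iff_ne_zero.mp h1, h2⟩
  · rintro ⟨h1, h2⟩; exact ⟨pos_iff_ne_zero.mpr h1, h2⟩

lemma mchoose_single_add {a b c : ℕ} {g η' : ℕ →₀ ℕ} (hag : g a = 0) (hη : η' ≤ g)
    (hc : c ≤ b) :
    mchoose (Finsupp.single a b + g) (Finsupp.single a c + η') = b.choose c * mchoose g η' := by
  classical
  have hηa : η' a = 0 := Nat.le_zero.mp (hag ▸ hη a)
  have hasupp : a ∉ g.support := Finsupp.notMem_support_iff.mpr hag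
  have hsub : (Finsupp.single a b + g).support ⊆ insert a g.support := by
    refine Finsupp.support_add.trans ?_
    apply Finset.union_subset
    · exact (Finsupp.support_single_subset).trans (by simp)
    · exact Finset.subset_insert _ _
  have hext : mchoose (Finsupp.single a b + g) (Finsupp.single a c + η')
      = ∏ j ∈ insert a g.support,
          ((Finsupp.single a b + g) j).choose ((Finsupp.single a c + η') j) := by
    rw [mchoose]
    apply Finset.prod_subset hsub
    intro j _ hj
    have hνj : (Finsupp.single a b + g) j = 0 := Finsupp.notMem_support_iff.mp hj
    have hηj : (Finsupp.single a c + η') j = 0 := by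
      rw [Finsupp.add_apply] at hνj ⊢
      rcases eq_or_ne j a with rfl | hja
      · rw [Finsupp.single_eq_same] at hνj ⊢
        omega
      · rw [Finsupp.single_eq_of_ne' (Ne.symm hja)] at hνj ⊢
        have := hη j
        omega
    rw [hνj, hηj]
    exact Nat.choose_zero_right 0
  rw [hext, Finset.prod_insert hasupp]
  have h1 : (Finsupp.single a b + g) a = b := by
    rw [Finsupp.add_apply, Finsupp.single_eq_same, hag]
    omega
  have h2 : (Finsupp.single a c + η') a = c := by
    rw [Finsupp.add_apply, Finsupp.single_eq_same, hηa]
    omega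
  rw [h1, h2, mchoose]
  congr 1
  apply Finset.prod_congr rfl
  intro j hj
  have hja : j ≠ a := fun h => hasupp (h ▸ hj)
  rw [Finsupp.add_apply, Finsupp.add_apply, Finsupp.single_eq_of_ne' (Ne.symm hja),
    Finsupp.single_eq_of_ne' (Ne.symm hja), zero_add, zero_add]

lemma sum_Iic_single_add {a b : ℕ} (g : ℕ →₀ ℕ) (hag : g a = 0) (F : (ℕ →₀ ℕ) → ℝ) :
    ∑ η ∈ Finset.Iic (Finsupp.single a b + g), F η
      = ∑ c ∈ range (b + 1), ∑ η' ∈ Finset.Iic g, F (Finsupp.single a c + η') := by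
  rw [← Finset.sum_product']
  refine Finset.sum_nbij' (fun η => (η a, η.erase a))
    (fun p => Finsupp.single a p.1 + p.2) ?_ ?_ ?_ ?_ ?_
  · intro η hη
    rw [Finset.mem_Iic] at hη
    rw [Finset.mem_product, Finset.mem_range, Finset.mem_Iic]
    constructor
    · have := hη a
      rw [Finsupp.add_apply, Finsupp.single_eq_same, hag] at this
      omega
    · rw [Finsupp.le_def]
      intro i
      rcases eq_or_ne i a with rfl | hia
      · rw [Finsupp.erase_same]; exact Nat.zero_le _
      · rw [Finsupp.erase_ne hia]
        have := hη i
        rw [Finsupp.add_apply, Finsupp.single_eq_of_ne' (Ne.symm hia), zero_add] at this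
        exact this
  · intro p hp
    rw [Finset.mem_product, Finset.mem_range, Finset.mem_Iic] at hp
    rw [Finset.mem_Iic, Finsupp.le_def]
    intro i
    rw [Finsupp.add_apply, Finsupp.add_apply]
    by_cases hia : i = a
    · subst hia
      rw [Finsupp.single_eq_same, Finsupp.single_eq_same]
      have := hp.2 i
      rw [hag] at this
      omega
    · rw [Finsupp.single_eq_of_ne' (fun h => hia h.symm),
        Finsupp.single_eq_of_ne' (fun h => hia h.symm)]
      exact Nat.add_le_add (le_refl 0) (hp.2 i)
  · intro η _
    dsimp only
    exact Finsupp.single_add_erase a η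
  · intro p hp
    rw [Finset.mem_product, Finset.mem_range, Finset.mem_Iic] at hp
    have hpa : p.2 a = 0 := Nat.le_zero.mp (hag ▸ hp.2 a)
    have h1 : (Finsupp.single a p.1 + p.2) a = p.1 := by
      rw [Finsupp.add_apply, Finsupp.single_eq_same, hpa]
      omega
    have h2 : (Finsupp.single a p.1 + p.2).erase a = p.2 := by
      rw [Finsupp.erase_add, Finsupp.erase_single, zero_add,
        Finsupp.erase_of_notMem_support (Finsupp.notMem_support_iff.mpr hpa)]
    rw [h1, h2]
  · intro η _
    dsimp only
    rw [Finsupp.single_add_erase]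

lemma vandermonde_fun (b m : ℕ) (f : ℕ → ℝ) :
    ∑ c ∈ range (b + 1), ∑ d ∈ range (m + 1),
        (b.choose c : ℝ) * (m.choose d : ℝ) * f (c + d)
      = ∑ k ∈ range (b + m + 1), ((b + m).choose k : ℝ) * f k := by
  rw [← Finset.sum_product']
  rw [← Finset.sum_fiberwise_of_maps_to (g := fun p : ℕ × ℕ => p.1 + p.2)
      (t := range (b + m + 1)) (fun p hp => by
        rw [Finset.mem_product, Finset.mem_range, Finset.mem_range] at hp
        rw [Finset.mem_range]; omega)]
  apply Finset.sum_congr rfl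
  intro k hk
  have hsum : ∑ p ∈ (range (b + 1) ×ˢ range (m + 1)).filter (fun p => p.1 + p.2 = k),
      (b.choose p.1 : ℝ) * (m.choose p.2 : ℝ) * f (p.1 + p.2)
      = ∑ p ∈ (range (b + 1) ×ˢ range (m + 1)).filter (fun p => p.1 + p.2 = k),
        ((b.choose p.1 * m.choose p.2 : ℕ) : ℝ) * f k := by
    apply Finset.sum_congr rfl
    intro p hp
    rw [Finset.mem_filter] at hp
    rw [hp.2]
    push_cast
    ring
  rw [hsum, ← Finset.sum_mul, ← Nat.cast_sum]
  congr 2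
  rw [Nat.add_choose_eq]
  apply Finset.sum_subset
  · intro p hp
    rw [Finset.mem_filter] at hp
    rw [Finset.HasAntidiagonal.mem_antidiagonal]
    exact hp.2
  · intro p hp hnp
    rw [Finset.HasAntidiagonal.mem_antidiagonal] at hp
    rw [Finset.mem_filter, Finset.mem_product, Finset.mem_range, Finset.mem_range] at hnp
    have : b < p.1 ∨ m < p.2 := by
      by_contra hcon
      push_neg at hcon
      exact hnp ⟨⟨by omega, by omega⟩, hp⟩
    rcases this with h | h
    · rw [Nat.choose_eq_zero_of_lt h, Nat.zero_mul]
    · rw [Nat.choose_eq_zero_of_lt h, Nat.mul_zero]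

lemma sum_Iic_mchoose (ν : ℕ →₀ ℕ) (f : ℕ → ℝ) :
    ∑ η ∈ Finset.Iic ν, (mchoose ν η : ℝ) * f (mdeg η)
      = ∑ k ∈ range (mdeg ν + 1), ((mdeg ν).choose k : ℝ) * f k := by
  induction ν using Finsupp.induction generalizing f with
  | zero =>
      rw [Iic_zero_finsupp, Finset.sum_singleton, mchoose_zero_right, mdeg_zero]
      simp
  | single_add a b g hag hb ih =>
      have hga : g a = 0 := Finsupp.notMem_support_iff.mp hag
      rw [sum_Iic_single_add g hga]
      have step1 : ∀ c ∈ range (b + 1),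
          ∑ η' ∈ Finset.Iic g, (mchoose (Finsupp.single a b + g) (Finsupp.single a c + η') : ℝ)
              * f (mdeg (Finsupp.single a c + η'))
            = ∑ m ∈ range (mdeg g + 1), (b.choose c : ℝ) * ((mdeg g).choose m : ℝ) * f (c + m) := by
        intro c hc
        have hcb : c ≤ b := by rw [Finset.mem_range] at hc; omega
        have hterm : ∀ η' ∈ Finset.Iic g,
            (mchoose (Finsupp.single a b + g) (Finsupp.single a c + η') : ℝ)
              * f (mdeg (Finsupp.single a c + η'))
            = (b.choose c : ℝ) * ((mchoose g η' : ℝ) * f (c + mdeg η')) := by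
          intro η' hη'
          rw [Finset.mem_Iic] at hη'
          rw [mchoose_single_add hga hη' hcb, mdeg_add, mdeg_single]
          push_cast
          ring
        rw [Finset.sum_congr rfl hterm, ← Finset.mul_sum, ih (fun m => f (c + m)),
          Finset.mul_sum]
        apply Finset.sum_congr rfl
        intro m _
        ring
      rw [Finset.sum_congr rfl step1, vandermonde_fun b (mdeg g) f]
      have : mdeg (Finsupp.single a b + g) = b + mdeg g := by
        rw [mdeg_add, mdeg_single]
      rw [this]


lemma inner_sum_eq (η : ℕ →₀ ℕ) :
    ∑ l ∈ Finset.Ioc 0 η, (mchoose η l : ℝ) * ffHalf (mdeg (η - l)) * ffHalf (mdeg l)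
      = ∑ m ∈ Icc 1 (mdeg η), ((mdeg η).choose m : ℝ) * ffHalf m * ffHalf (mdeg η - m) := by
  rw [Ioc_zero_finsupp]
  have h0 : (0 : ℕ →₀ ℕ) ∈ Finset.Iic η := by simp
  rw [Finset.sum_erase_eq_sub h0]
  have hterm : ∀ l ∈ Finset.Iic η,
      (mchoose η l : ℝ) * ffHalf (mdeg (η - l)) * ffHalf (mdeg l)
      = (mchoose η l : ℝ) * ((fun m => ffHalf (mdeg η - m) * ffHalf m) (mdeg l)) := by
    intro l hl
    rw [Finset.mem_Iic] at hl
    rw [mdeg_sub hl]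
    ring
  rw [Finset.sum_congr rfl hterm, sum_Iic_mchoose η (fun m => ffHalf (mdeg η - m) * ffHalf m)]
  have hzero : (mchoose η 0 : ℝ) * ffHalf (mdeg (η - 0)) * ffHalf (mdeg 0)
      = ffHalf (mdeg η) := by
    rw [mchoose_zero_right, mdeg_zero, tsub_zero, ffHalf_zero]
    push_cast
    ring
  rw [hzero]
  have hsplit : range (mdeg η + 1) = insert 0 (Icc 1 (mdeg η)) := by
    ext x
    simp only [Finset.mem_range, Finset.mem_insert, Finset.mem_Icc]
    omega
  rw [hsplit, Finset.sum_insert (by simp)]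
  simp only [Nat.choose_zero_right, Nat.cast_one, Nat.sub_zero, ffHalf_zero]
  have : ∀ m ∈ Icc 1 (mdeg η),
      ((mdeg η).choose m : ℝ) * (ffHalf (mdeg η - m) * ffHalf m)
      = ((mdeg η).choose m : ℝ) * ffHalf m * ffHalf (mdeg η - m) := by
    intro m _
    ring
  rw [Finset.sum_congr rfl this]
  ring

theorem ffHalf_multiindex_double_sum_le (ν e : ℕ →₀ ℕ) (j : ℕ)
    (he : e = Finsupp.single j 1) :
    ∑ η ∈ Finset.Ioc 0 ν, ∑ l ∈ Finset.Ioc 0 η,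
        (mchoose ν η : ℝ) * (mchoose η l : ℝ) * ffHalf (mdeg (η - l))
          * ffHalf (mdeg l) * ffHalf (mdeg (ν + e - η))
      ≤ 3 * ffHalf (mdeg (ν + e)) := by
  subst he
  have hne : mdeg (ν + Finsupp.single j 1) = mdeg ν + 1 := by
    rw [mdeg_add, mdeg_single]
  rw [hne]
  have key : ∀ η ∈ Finset.Ioc 0 ν,
      ∑ l ∈ Finset.Ioc 0 η,
          (mchoose ν η : ℝ) * (mchoose η l : ℝ) * ffHalf (mdeg (η - l))
            * ffHalf (mdeg l) * ffHalf (mdeg (ν + Finsupp.single j 1 - η))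
      = (mchoose ν η : ℝ) *
          ((fun k => (∑ m ∈ Icc 1 k, (k.choose m : ℝ) * ffHalf m * ffHalf (k - m))
            * ffHalf (mdeg ν + 1 - k)) (mdeg η)) := by
    intro η hη
    rw [Finset.mem_Ioc] at hη
    have hle : η ≤ ν := hη.2
    have hle' : η ≤ ν + Finsupp.single j 1 := le_trans hle le_self_add
    have hmd : mdeg (ν + Finsupp.single j 1 - η) = mdeg ν + 1 - mdeg η := by
      rw [mdeg_sub hle', hne]
    have hre : ∀ l ∈ Finset.Ioc 0 η,
        (mchoose ν η : ℝ) * (mchoose η l : ℝ) * ffHalf (mdeg (η - l))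
          * ffHalf (mdeg l) * ffHalf (mdeg (ν + Finsupp.single j 1 - η))
        = ((mchoose ν η : ℝ) * ffHalf (mdeg ν + 1 - mdeg η))
            * ((mchoose η l : ℝ) * ffHalf (mdeg (η - l)) * ffHalf (mdeg l)) := by
      intro l _
      rw [hmd]
      ring
    rw [Finset.sum_congr rfl hre, ← Finset.mul_sum, inner_sum_eq η]
    ring
  rw [Finset.sum_congr rfl key, Ioc_zero_finsupp]
  have hzt : (mchoose ν 0 : ℝ) *
      ((fun k => (∑ m ∈ Icc 1 k, (k.choose m : ℝ) * ffHalf m * ffHalf (k - m))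
        * ffHalf (mdeg ν + 1 - k)) (mdeg 0)) = 0 := by
    rw [mdeg_zero]
    simp
  rw [Finset.sum_erase_eq_sub (show (0 : ℕ →₀ ℕ) ∈ Finset.Iic ν by simp), hzt, sub_zero]
  rw [sum_Iic_mchoose ν (fun k => (∑ m ∈ Icc 1 k, (k.choose m : ℝ) * ffHalf m * ffHalf (k - m))
        * ffHalf (mdeg ν + 1 - k))]
  have hsplit : range (mdeg ν + 1) = insert 0 (Icc 1 (mdeg ν)) := by
    ext x
    simp only [Finset.mem_range, Finset.mem_insert, Finset.mem_Icc]
    omega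
  rw [hsplit, Finset.sum_insert (by simp)]
  have hz2 : ((mdeg ν).choose 0 : ℝ) *
      ((fun k => (∑ m ∈ Icc 1 k, (k.choose m : ℝ) * ffHalf m * ffHalf (k - m))
        * ffHalf (mdeg ν + 1 - k)) 0) = 0 := by
    simp
  rw [hz2, zero_add]
  have hshape : ∀ k ∈ Icc 1 (mdeg ν),
      ((mdeg ν).choose k : ℝ) *
        ((fun k => (∑ m ∈ Icc 1 k, (k.choose m : ℝ) * ffHalf m * ffHalf (k - m))
          * ffHalf (mdeg ν + 1 - k)) k)
      = ((mdeg ν).choose k : ℝ)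
          * (∑ m ∈ Icc 1 k, (k.choose m : ℝ) * ffHalf m * ffHalf (k - m))
          * ffHalf (mdeg ν + 1 - k) := by
    intro k _
    simp only
    ring
  rw [Finset.sum_congr rfl hshape]
  exact scalar_final (mdeg ν)
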